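/- Let G be a finite 3-connected simple graph and let S be a 3-cut of G. If G − S consists of k components where k ≥ 4, then G contains at least k(k−1)/2 contractible non-edges. -/

import Mathlib

open SimpleGraph

variable {V : Type*}

/-- A graph is `k`-connected: it has at least `k+1` vertices, and removing any set of
fewer than `k` vertices leaves a connected graph. -/
def KConnected (k : ℕ) (G : SimpleGraph V) : Prop :=
  k + 1 ≤ Nat.card V ∧ ∀ S : Set V, S.ncard < k → (G.induce Sᶜ).Connected

/-- Contraction of the non-edge `{u, v}`: `u` and `v` are replaced by a single
vertex (represented here by `u`), adjacent to every vertex that was adjacent to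
`u` or to `v`. -/
def contractNonEdge (G : SimpleGraph V) (u v : V) : SimpleGraph {w : V // w ≠ v} where
  Adj a b := a ≠ b ∧ (G.Adj a.1 b.1 ∨ (a.1 = u ∧ G.Adj v b.1) ∨ (b.1 = u ∧ G.Adj a.1 v))
  symm := by
    constructor
    rintro a b ⟨hab, h | ⟨h1, h2⟩ | ⟨h1, h2⟩⟩
    · exact ⟨hab.symm, Or.inl h.symm⟩
    · exact ⟨hab.symm, Or.inr (Or.inr ⟨h1, h2.symm⟩)⟩
    · exact ⟨hab.symm, Or.inr (Or.inl ⟨h1, h2.symm⟩)⟩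
  loopless := ⟨fun a h => h.1 rfl⟩

/-- `{u, v}` is a contractible non-edge of `G`: a non-edge whose contraction yields
a `3`-connected graph. -/
def IsContractibleNonEdge (G : SimpleGraph V) (u v : V) : Prop :=
  u ≠ v ∧ ¬ G.Adj u v ∧ KConnected 3 (contractNonEdge G u v)

/-- The set of contractible non-edges of `G`, as unordered pairs of vertices. -/
def contractibleNonEdges (G : SimpleGraph V) : Set (Sym2 V) :=
  {p | ∃ u v : V, p = s(u, v) ∧ IsContractibleNonEdge G u v}

/-- `S` is a cut of `G`: deleting the vertices of `S` leaves a disconnected graph. -/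
def IsCutSet (G : SimpleGraph V) (S : Set V) : Prop :=
  ¬ (G.induce Sᶜ).Preconnected

/-- `C` is the vertex set of a (connected) component of `G − S`. -/
def IsCompOf (G : SimpleGraph V) (S : Set V) (C : Set V) : Prop :=
  C.Nonempty ∧ C ⊆ Sᶜ ∧ (G.induce C).Connected ∧
    ∀ x ∈ C, ∀ y, y ∉ S → G.Adj x y → y ∈ C

section Aux

variable {G : SimpleGraph V} {S : Set V}

private lemma walk_end_prop {α : Type*} {H : SimpleGraph α} {P : α → Prop}
    (hP : ∀ a b, H.Adj a b → P a → P b) {x y : α} (p : H.Walk x y) (hx : P x) : P y := by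
  induction p with
  | nil => exact hx
  | cons h q ih => exact ih (hP _ _ h hx)

private lemma reach_transfer {s t : Set V} (hst : s ⊆ t) {a b : ↑s}
    (h : (G.induce s).Reachable a b) :
    (G.induce t).Reachable ⟨a.1, hst a.2⟩ ⟨b.1, hst b.2⟩ := by
  obtain ⟨p⟩ := h
  let F : G.induce s →g G.induce t := ⟨fun x => ⟨x.1, hst x.2⟩, fun {x y} h => h⟩
  exact ⟨p.map F⟩

private lemma comp_eq_of_mem {C D : Set V} (hC : IsCompOf G S C)
    (hD : IsCompOf G S D) {x : V} (hxC : x ∈ C) (hxD : x ∈ D) : C = D := by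
  have key : ∀ {A B : Set V}, IsCompOf G S A → IsCompOf G S B → x ∈ A → x ∈ B → A ⊆ B := by
    intro A B hA hB hxA hxB y hy
    obtain ⟨pA⟩ := hA.2.2.1.preconnected ⟨x, hxA⟩ ⟨y, hy⟩
    exact walk_end_prop (P := fun z : ↑A => z.1 ∈ B)
      (fun a b hab ha => hB.2.2.2 a.1 ha b.1 (hA.2.1 b.2) hab) pA hxB
  exact (key hC hD hxC hxD).antisymm (key hD hC hxD hxC)

private lemma exists_comp {x : V} (hx : x ∉ S) :
    ∃ E, IsCompOf G S E ∧ x ∈ E := by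
  classical
  have hx' : x ∈ (Sᶜ : Set V) := hx
  set E : Set V := {y | ∃ hy : y ∈ (Sᶜ : Set V), (G.induce Sᶜ).Reachable ⟨x, hx'⟩ ⟨y, hy⟩}
    with hEdef
  have hxE : x ∈ E := ⟨hx', Reachable.refl _⟩
  have hES : E ⊆ Sᶜ := fun y hy => hy.1
  have hreach : ∀ c : ↑E, (G.induce E).Reachable ⟨x, hxE⟩ c := by
    rintro ⟨c, hc', ⟨p⟩⟩
    have hsup : ∀ z ∈ p.support, z.1 ∈ E := by
      intro z hz
      exact ⟨z.2, ⟨p.takeUntil z hz⟩⟩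
    -- build reachability in induce E by induction on p
    have : ∀ {a b : ↑(Sᶜ : Set V)} (q : (G.induce Sᶜ).Walk a b)
        (ha : a.1 ∈ E) (hb : b.1 ∈ E) (h : ∀ z ∈ q.support, z.1 ∈ E),
        (G.induce E).Reachable ⟨a.1, ha⟩ ⟨b.1, hb⟩ := by
      intro a b q
      induction q with
      | nil => intro _ _ _; exact Reachable.refl _
      | @cons a c b hadj q ih =>
        intro ha hb h
        have hcE : c.1 ∈ E := h c (by simp [Walk.support_cons])
        have hq : ∀ z ∈ q.support, z.1 ∈ E := fun z hz =>
          h z (by simp [Walk.support_cons]; right; exact hz)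
        exact (Adj.reachable (show (G.induce E).Adj ⟨a.1, ha⟩ ⟨c.1, hcE⟩ from hadj)).trans
          (ih hcE hb hq)
    exact this p hxE (hsup _ p.end_mem_support) hsup
  haveI : Nonempty ↑E := ⟨⟨x, hxE⟩⟩
  refine ⟨E, ⟨⟨x, hxE⟩, hES, ⟨fun a b => (hreach a).symm.trans (hreach b)⟩, ?_⟩, hxE⟩
  · intro x1 hx1 y hyS hadj
    obtain ⟨h1, hr⟩ := hx1
    exact ⟨hyS, hr.trans (Adj.reachable (show (G.induce Sᶜ).Adj ⟨x1, h1⟩ ⟨y, hyS⟩ from hadj))⟩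

private lemma S_finite (hS3 : S.ncard = 3) : S.Finite := by
  by_contra h
  rw [Set.Infinite.ncard h] at hS3
  omega

private lemma comp_nbr (hG : KConnected 3 G) (hS3 : S.ncard = 3)
    (hk : 4 ≤ {C | IsCompOf G S C}.ncard) {E : Set V} (hE : IsCompOf G S E) {s : V}
    (hs : s ∈ S) : ∃ e ∈ E, G.Adj s e := by
  classical
  by_contra hno
  push_neg at hno
  have hlt : (S \ {s}).ncard < 3 := hS3 ▸ Set.ncard_diff_singleton_lt_of_mem hs (S_finite hS3)
  have hconn := hG.2 _ hlt
  obtain ⟨F, hF, hFE⟩ : ∃ F, IsCompOf G S F ∧ F ≠ E := by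
    by_contra h
    push_neg at h
    have hsub : {C | IsCompOf G S C} ⊆ {E} := fun C hC => h C hC
    have := Set.ncard_le_ncard hsub (Set.finite_singleton E)
    rw [Set.ncard_singleton] at this
    omega
  obtain ⟨e, he⟩ := hE.1
  obtain ⟨f, hf⟩ := hF.1
  have heS : e ∈ ((S \ {s})ᶜ : Set V) := fun h => (hE.2.1 he) h.1
  have hfS : f ∈ ((S \ {s})ᶜ : Set V) := fun h => (hF.2.1 hf) h.1
  obtain ⟨p⟩ := hconn.preconnected ⟨e, heS⟩ ⟨f, hfS⟩
  have hfE : f ∈ E := by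
    refine walk_end_prop (P := fun z : ↑((S \ {s})ᶜ : Set V) => z.1 ∈ E) ?_ p he
    intro a b hab ha
    by_cases hbS : b.1 ∈ S
    · have hbs : b.1 = s := by
        have hb2 := b.2
        simp only [Set.mem_compl_iff, Set.mem_diff, Set.mem_singleton_iff, not_and,
          not_not] at hb2
        exact hb2 hbS
      have hsa : G.Adj b.1 a.1 := (show G.Adj a.1 b.1 from hab).symm
      rw [hbs] at hsa
      exact absurd hsa (hno a.1 ha)
    · exact hE.2.2.2 a.1 ha b.1 hbS hab
  exact hFE (comp_eq_of_mem hF hE hf hfE)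

private lemma reach_lemma {E T : Set V} {a b : V} (hE : IsCompOf G S E)
    (hT : ∀ x ∈ T, x ∈ E ∪ S → x = a ∨ x = b) :
    ∀ {x y : ↑(({a, b} : Set V)ᶜ)} (p : (G.induce (({a, b} : Set V)ᶜ)).Walk x y),
      x.1 ∈ E → y.1 ∈ S →
      ∃ s, s ∈ S ∧ s ∉ T ∧ ∃ (h1 : x.1 ∈ (Tᶜ : Set V)) (h2 : s ∈ (Tᶜ : Set V)),
        (G.induce Tᶜ).Reachable ⟨x.1, h1⟩ ⟨s, h2⟩ := by
  intro x y p
  induction p with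
  | nil => exact fun hxE hxS => absurd hxS (hE.2.1 hxE)
  | @cons x m y hadj q ih =>
    intro hxE hyS
    have hxab : x.1 ≠ a ∧ x.1 ≠ b := by
      have := x.2; simp only [Set.mem_compl_iff, Set.mem_insert_iff, Set.mem_singleton_iff,
        not_or] at this; exact this
    have hmab : m.1 ≠ a ∧ m.1 ≠ b := by
      have := m.2; simp only [Set.mem_compl_iff, Set.mem_insert_iff, Set.mem_singleton_iff,
        not_or] at this; exact this
    have hx1 : x.1 ∈ (Tᶜ : Set V) := by
      intro hxT
      rcases hT _ hxT (Or.inl hxE) with h | h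
      exacts [hxab.1 h, hxab.2 h]
    by_cases hmE : m.1 ∈ E
    · have hm1 : m.1 ∈ (Tᶜ : Set V) := by
        intro hmT
        rcases hT _ hmT (Or.inl hmE) with h | h
        exacts [hmab.1 h, hmab.2 h]
      obtain ⟨s, hsS, hsT, h1, h2, hr⟩ := ih hmE hyS
      refine ⟨s, hsS, hsT, hx1, h2, ?_⟩
      exact (Adj.reachable (show (G.induce (Tᶜ : Set V)).Adj ⟨x.1, hx1⟩ ⟨m.1, hm1⟩ from
        hadj)).trans hr
    · have hmS : m.1 ∈ S := by
        by_contra h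
        exact hmE (hE.2.2.2 x.1 hxE m.1 h hadj)
      have hmT : m.1 ∉ T := by
        intro hmT
        rcases hT _ hmT (Or.inr hmS) with h | h
        exacts [hmab.1 h, hmab.2 h]
      exact ⟨m.1, hmS, hmT, hx1, hmT, Adj.reachable
        (show (G.induce (Tᶜ : Set V)).Adj ⟨x.1, hx1⟩ ⟨m.1, hmT⟩ from hadj)⟩

private lemma cut_conn (hG : KConnected 3 G) (hS3 : S.ncard = 3)
    (hk : 4 ≤ {C | IsCompOf G S C}.ncard)
    {C D : Set V} (hC : IsCompOf G S C) (hD : IsCompOf G S D) (hCD : C ≠ D)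
    {u v : V} (hu : u ∈ C) (hv : v ∈ D) (t : V) :
    (G.induce (({u, v, t} : Set V)ᶜ)).Connected := by
  classical
  set T : Set V := {u, v, t} with hTdef
  have huS : u ∉ S := hC.2.1 hu
  have hvS : v ∉ S := hD.2.1 hv
  have hvC : v ∉ C := fun h => hCD (comp_eq_of_mem hC hD h hv)
  have huD : u ∉ D := fun h => hCD (comp_eq_of_mem hC hD hu h)
  -- a spare component avoiding u, v, t
  obtain ⟨E₀, hE₀, huE₀, hvE₀, htE₀⟩ :
      ∃ E₀, IsCompOf G S E₀ ∧ u ∉ E₀ ∧ v ∉ E₀ ∧ t ∉ E₀ := by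
    by_contra h
    push_neg at h
    by_cases ht : ∃ E₁, IsCompOf G S E₁ ∧ t ∈ E₁
    · obtain ⟨E₁, hE₁, htE₁⟩ := ht
      have hsub : {X | IsCompOf G S X} ⊆ {C, D, E₁} := by
        intro X hX
        by_cases hXu : u ∈ X
        · exact Or.inl (comp_eq_of_mem hX hC hXu hu)
        by_cases hXv : v ∈ X
        · exact Or.inr (Or.inl (comp_eq_of_mem hX hD hXv hv))
        · exact Or.inr (Or.inr (comp_eq_of_mem hX hE₁ (h X hX hXu hXv) htE₁))
      have h1 := Set.ncard_le_ncard hsub (Set.toFinite _)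
      have h2 : ({C, D, E₁} : Set (Set V)).ncard ≤ 3 := by
        refine le_trans (Set.ncard_insert_le _ _) ?_
        have := le_trans (Set.ncard_insert_le D {E₁}) (by rw [Set.ncard_singleton])
        omega
      omega
    · push_neg at ht
      have hsub : {X | IsCompOf G S X} ⊆ {C, D} := by
        intro X hX
        by_cases hXu : u ∈ X
        · exact Or.inl (comp_eq_of_mem hX hC hXu hu)
        by_cases hXv : v ∈ X
        · exact Or.inr (comp_eq_of_mem hX hD hXv hv)
        · exact absurd (h X hX hXu hXv) (ht X hX)
      have h1 := Set.ncard_le_ncard hsub (Set.toFinite _)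
      have h2 : ({C, D} : Set (Set V)).ncard ≤ 2 := by
        refine le_trans (Set.ncard_insert_le _ _) ?_
        rw [Set.ncard_singleton]
      omega
  have hE₀T : E₀ ⊆ (Tᶜ : Set V) := by
    intro x hx hxT
    rcases hxT with rfl | rfl | rfl
    exacts [huE₀ hx, hvE₀ hx, htE₀ hx]
  -- a base vertex of S outside T
  obtain ⟨s0, hs0S, hs0t⟩ : ∃ s0, s0 ∈ S ∧ s0 ≠ t := by
    obtain ⟨a, b, c, hab, hac, hbc, rfl⟩ := Set.ncard_eq_three.mp hS3
    by_cases hat : a = t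
    · exact ⟨b, by simp, fun h => hab (hat.trans h.symm)⟩
    · exact ⟨a, by simp, hat⟩
  have hSnotT : ∀ s ∈ S, s ≠ t → s ∉ T := by
    intro s hsS hst hsT
    rcases hsT with rfl | rfl | rfl
    exacts [huS hsS, hvS hsS, hst rfl]
  have hs0T : s0 ∉ T := hSnotT s0 hs0S hs0t
  -- all vertices of S \ T reach s0 inside G − T
  have hSreach : ∀ s (hsS : s ∈ S) (hsT : s ∉ T),
      (G.induce (Tᶜ : Set V)).Reachable ⟨s, hsT⟩ ⟨s0, hs0T⟩ := by
    intro s hsS hsT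
    obtain ⟨e, heE, heAdj⟩ := comp_nbr hG hS3 hk hE₀ hsS
    obtain ⟨e0, he0E, he0Adj⟩ := comp_nbr hG hS3 hk hE₀ hs0S
    have h1 : (G.induce (Tᶜ : Set V)).Reachable ⟨e, hE₀T heE⟩ ⟨e0, hE₀T he0E⟩ :=
      reach_transfer hE₀T (hE₀.2.2.1.preconnected ⟨e, heE⟩ ⟨e0, he0E⟩)
    refine (Adj.reachable (show (G.induce (Tᶜ : Set V)).Adj ⟨s, hsT⟩ ⟨e, hE₀T heE⟩ from
      heAdj)).trans (h1.trans ?_)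
    exact Adj.reachable (show (G.induce (Tᶜ : Set V)).Adj ⟨e0, hE₀T he0E⟩ ⟨s0, hs0T⟩ from
      he0Adj.symm)
  -- every vertex of G − T reaches s0
  have hreach : ∀ w (hw : w ∈ (Tᶜ : Set V)),
      (G.induce (Tᶜ : Set V)).Reachable ⟨w, hw⟩ ⟨s0, hs0T⟩ := by
    intro w hw
    by_cases hwS : w ∈ S
    · exact hSreach w hwS hw
    obtain ⟨E, hE, hwE⟩ := exists_comp hwS
    have key : ∀ a b : V, ({a, b} : Set V) ⊆ T → (∀ x ∈ T, x ∈ E ∪ S → x = a ∨ x = b) →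
        (G.induce (Tᶜ : Set V)).Reachable ⟨w, hw⟩ ⟨s0, hs0T⟩ := by
      intro a b habT hTab
      have hab_small : ({a, b} : Set V).ncard < 3 := by
        have := le_trans (Set.ncard_insert_le a {b}) (by rw [Set.ncard_singleton])
        omega
      obtain ⟨p⟩ := (hG.2 _ hab_small).preconnected
        ⟨w, fun h => hw (habT h)⟩ ⟨s0, fun h => hs0T (habT h)⟩
      obtain ⟨s, hsS, hsT, h1, h2, hr⟩ := reach_lemma hE hTab p hwE hs0S
      exact hr.trans (hSreach s hsS hsT)
    by_cases hEC : E = C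
    · subst hEC
      have hsub : ({u, t} : Set V) ⊆ T := by
        rintro x (rfl | rfl)
        exacts [Or.inl rfl, Or.inr (Or.inr rfl)]
      refine key u t hsub ?_
      intro x hxT hxES
      rcases hxT with rfl | rfl | rfl
      · exact Or.inl rfl
      · rcases hxES with h | h
        exacts [absurd h hvC, absurd h hvS]
      · exact Or.inr rfl
    by_cases hED : E = D
    · subst hED
      have hsub : ({v, t} : Set V) ⊆ T := by
        rintro x (rfl | rfl)
        exacts [Or.inr (Or.inl rfl), Or.inr (Or.inr rfl)]
      refine key v t hsub ?_
      intro x hxT hxES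
      rcases hxT with rfl | rfl | rfl
      · rcases hxES with h | h
        exacts [absurd h huD, absurd h huS]
      · exact Or.inl rfl
      · exact Or.inr rfl
    · have hsub : ({t, t} : Set V) ⊆ T := by
        rintro x (rfl | rfl) <;> exact Or.inr (Or.inr rfl)
      refine key t t hsub ?_
      intro x hxT hxES
      rcases hxT with rfl | rfl | rfl
      · rcases hxES with h | h
        exacts [absurd (comp_eq_of_mem hE hC h hu) hEC, absurd h huS]
      · rcases hxES with h | h
        exacts [absurd (comp_eq_of_mem hE hD h hv) hED, absurd h hvS]
      · exact Or.inl rfl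
  haveI : Nonempty ↑(Tᶜ : Set V) := ⟨⟨s0, hs0T⟩⟩
  exact ⟨fun x y => (hreach x.1 x.2).trans (hreach y.1 y.2).symm⟩

private lemma contractible_of_comps [Fintype V] (hG : KConnected 3 G) (hS3 : S.ncard = 3)
    (hk : 4 ≤ {C | IsCompOf G S C}.ncard)
    {C D : Set V} (hC : IsCompOf G S C) (hD : IsCompOf G S D) (hCD : C ≠ D)
    {u v : V} (hu : u ∈ C) (hv : v ∈ D) :
    IsContractibleNonEdge G u v := by
  classical
  have hvC : v ∉ C := fun h => hCD (comp_eq_of_mem hC hD h hv)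
  have hne : u ≠ v := fun h => hvC (h ▸ hu)
  have hnadj : ¬ G.Adj u v := fun h => hvC (hC.2.2.2 u hu v (hD.2.1 hv) h)
  have hcast : ∀ {x y : {w : V // w ≠ v}}, x = y → (x.1 : V) = y.1 :=
    fun h => congrArg Subtype.val h
  refine ⟨hne, hnadj, ?_, ?_⟩
  · -- cardinality
    have huS : u ∉ S := hC.2.1 hu
    have hvS : v ∉ S := hD.2.1 hv
    have h2 : ({u, v} : Set V).ncard ≤ (Sᶜ : Set V).ncard := by
      refine Set.ncard_le_ncard ?_ (Set.toFinite _)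
      rintro x (rfl | rfl)
      exacts [huS, hvS]
    rw [Set.ncard_pair hne] at h2
    have h3 := Set.ncard_add_ncard_compl S
    have h4 : Nat.card {w : V // w ≠ v} = Fintype.card V - 1 := by
      rw [Nat.card_eq_fintype_card]
      have : Fintype.card {w : V // ¬ (w = v)} = Fintype.card V - Fintype.card {w : V // w = v} :=
        Fintype.card_subtype_compl _
      rw [Fintype.card_subtype_eq] at this
      exact this
    have h5 : (Set.univ : Set V).ncard = Fintype.card V := by
      rw [Set.ncard_univ, Nat.card_eq_fintype_card]
    rw [h4]
    have h6 : S.ncard + (Sᶜ : Set V).ncard = Fintype.card V := by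
      rw [h3, Nat.card_eq_fintype_card]
    omega
  · -- cuts
    intro T' hT'
    set z : {w : V // w ≠ v} := ⟨u, hne⟩ with hzdef
    by_cases hz : z ∈ T'
    · -- the merged vertex is removed
      obtain ⟨τ, hτ⟩ : ∃ τ : V, ∀ y : {w : V // w ≠ v}, y ∈ T' ↔ (y.1 = u ∨ y.1 = τ) := by
        rcases Set.eq_empty_or_nonempty (T' \ {z}) with hemp | ⟨t', ht'⟩
        · refine ⟨u, fun y => ⟨fun hy => Or.inl ?_, fun hy => ?_⟩⟩
          · have : y ∈ ({z} : Set _) := by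
              by_contra h
              exact absurd (Set.mem_diff y |>.mpr ⟨hy, h⟩) (hemp ▸ Set.notMem_empty y)
            rw [Set.mem_singleton_iff] at this
            rw [this]
          · have : y = z := Subtype.ext (by rcases hy with h | h <;> exact h)
            rwa [this]
        · have hne' : z ≠ t' := fun h => ht'.2 (h ▸ rfl)
          have hsub : ({z, t'} : Set _) ⊆ T' := by
            rintro x (rfl | rfl)
            exacts [hz, ht'.1]
          have heq : ({z, t'} : Set _) = T' := by
            refine Set.eq_of_subset_of_ncard_le hsub ?_ (Set.toFinite _)
            rw [Set.ncard_pair hne']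
            omega
          refine ⟨t'.1, fun y => ⟨fun hy => ?_, fun hy => ?_⟩⟩
          · rw [← heq] at hy
            rcases hy with rfl | rfl
            exacts [Or.inl rfl, Or.inr rfl]
          · rw [← heq]
            rcases hy with h | h
            · exact Or.inl (Subtype.ext h)
            · exact Or.inr (Subtype.ext h)
      set T : Set V := {u, v, τ} with hTdef
      have hmem : ∀ y : {w : V // w ≠ v}, y ∈ T' ↔ y.1 ∈ T := by
        intro y
        rw [hτ y]
        constructor
        · rintro (h | h)
          exacts [Or.inl h, Or.inr (Or.inr h)]
        · rintro (h | h | h)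
          exacts [Or.inl h, absurd h y.2, Or.inr h]
      have hconnT := cut_conn hG hS3 hk hC hD hCD hu hv τ
      have hvT : v ∈ T := Or.inr (Or.inl rfl)
      refine Connected.map ⟨fun w => (⟨⟨w.1, fun h => w.2 (Or.inr (Or.inl h))⟩,
        fun h => w.2 ((hmem _).1 h)⟩ : ↑(T'ᶜ)), ?_⟩ ?_ hconnT
      · intro a b hab
        have hab' : G.Adj a.1 b.1 := hab
        change _ ≠ _ ∧ _
        exact ⟨fun h => hab'.ne (hcast h), Or.inl hab'⟩
      · rintro ⟨y, hy⟩
        refine ⟨⟨y.1, fun hT => hy ((hmem y).2 hT)⟩, ?_⟩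
        apply Subtype.ext
        apply Subtype.ext
        rfl
    · -- the merged vertex survives
      set T : Set V := Subtype.val '' T' with hTdef
      have hTcard : T.ncard < 3 := by
        rwa [Set.ncard_image_of_injective _ Subtype.val_injective]
      have hconnT := hG.2 T hTcard
      have huT : u ∉ T := by
        rintro ⟨w, hw, hwu⟩
        exact hz (by rwa [show w = z from Subtype.ext hwu] at hw)
      let f : ↑(Tᶜ : Set V) → ↑(T'ᶜ) := fun w =>
        if h : w.1 = v then ⟨z, hz⟩
        else ⟨⟨w.1, h⟩, fun hmem => w.2 ⟨⟨w.1, h⟩, hmem, rfl⟩⟩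
      have hfadj : ∀ a b : ↑(Tᶜ : Set V), (G.induce (Tᶜ : Set V)).Adj a b →
          ((contractNonEdge G u v).induce (T'ᶜ)).Adj (f a) (f b) := by
        intro a b hab
        have hab' : G.Adj a.1 b.1 := hab
        by_cases ha : a.1 = v <;> by_cases hb : b.1 = v
        · exact absurd (ha.trans hb.symm) hab'.ne
        · simp only [f, dif_pos ha, dif_neg hb]
          change _ ≠ _ ∧ _
          refine ⟨fun h => ?_, Or.inr (Or.inl ⟨rfl, by rwa [ha] at hab'⟩)⟩
          have : u = b.1 := congrArg Subtype.val h
          apply hnadj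
          rw [this, ← ha]
          exact hab'.symm
        · simp only [f, dif_neg ha, dif_pos hb]
          change _ ≠ _ ∧ _
          refine ⟨fun h => ?_, Or.inr (Or.inr ⟨rfl, by rwa [hb] at hab'⟩)⟩
          have : a.1 = u := congrArg Subtype.val h
          apply hnadj
          rw [← this, ← hb]
          exact hab'
        · simp only [f, dif_neg ha, dif_neg hb]
          change _ ≠ _ ∧ _
          exact ⟨fun h => hab'.ne (hcast h), Or.inl hab'⟩
      have hfsurj : Function.Surjective f := by
        rintro ⟨y, hy⟩
        have hyT : y.1 ∈ (Tᶜ : Set V) := by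
          rintro ⟨w, hw, hval⟩
          exact hy (by rwa [show w = y from Subtype.ext hval] at hw)
        refine ⟨⟨y.1, hyT⟩, ?_⟩
        apply Subtype.ext
        apply Subtype.ext
        simp only [f, dif_neg y.2]
      exact Connected.map ⟨f, fun {a b} h => hfadj a b h⟩ hfsurj hconnT

end Aux

/-- Let `G` be a finite 3-connected graph and `S` a 3-cut of `G`. If `G − S` consists
of `k ≥ 4` components, then `G` contains at least `k(k−1)/2` contractible non-edges. -/
theorem stmt2 {V : Type*} [Fintype V] (G : SimpleGraph V) (hG : KConnected 3 G)
    (S : Set V) (hS3 : S.ncard = 3) (hScut : IsCutSet G S)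
    (k : ℕ) (hk : 4 ≤ k)
    (hcomps : {C : Set V | IsCompOf G S C}.ncard = k) :
    k * (k - 1) / 2 ≤ (contractibleNonEdges G).ncard := by
  classical
  have hk4 : 4 ≤ {C : Set V | IsCompOf G S C}.ncard := hcomps ▸ hk
  have hV : Nonempty V := by
    have h1 := hG.1
    rw [Nat.card_eq_fintype_card] at h1
    exact Fintype.card_pos_iff.mp (by omega)
  let rep : Set V → V := fun C => if h : C.Nonempty then h.some else Classical.arbitrary V
  have hrep : ∀ C, IsCompOf G S C → rep C ∈ C := by
    intro C hC
    simp only [rep, dif_pos hC.1]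
    exact hC.1.some_mem
  have hfin : {C : Set V | IsCompOf G S C}.Finite := Set.toFinite _
  set 𝒞' : Finset (Set V) := hfin.toFinset with h𝒞'
  have hmem𝒞' : ∀ C, C ∈ 𝒞' ↔ IsCompOf G S C := by
    intro C
    rw [h𝒞', Set.Finite.mem_toFinset]
    rfl
  have hcard : 𝒞'.card = k := by
    rw [← hcomps, Set.ncard_eq_toFinset_card _ hfin]
  set P : Finset (Sym2 (Set V)) := 𝒞'.offDiag.image Sym2.mk.uncurry with hP
  have hPcard : P.card = k.choose 2 := by
    rw [hP, Sym2.card_image_offDiag, hcard]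
  set Q : Finset (Sym2 V) := P.image (Sym2.map rep) with hQ
  have hQcard : Q.card = P.card := by
    refine Finset.card_image_of_injOn ?_
    intro p hp q hq h
    obtain ⟨⟨Cp, Dp⟩, hpd, rfl⟩ := Finset.mem_image.mp hp
    obtain ⟨⟨Cq, Dq⟩, hqd, rfl⟩ := Finset.mem_image.mp hq
    obtain ⟨hCp, hDp, hpne⟩ := Finset.mem_offDiag.mp hpd
    obtain ⟨hCq, hDq, hqne⟩ := Finset.mem_offDiag.mp hqd
    simp only [Function.uncurry_apply_pair] at h ⊢
    rw [Sym2.map_pair_eq, Sym2.map_pair_eq, Sym2.eq_iff] at h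
    have hinj : ∀ {A B : Set V}, A ∈ 𝒞' → B ∈ 𝒞' → rep A = rep B → A = B := by
      intro A B hA hB hAB
      exact comp_eq_of_mem ((hmem𝒞' A).1 hA) ((hmem𝒞' B).1 hB) (hrep A ((hmem𝒞' A).1 hA))
        (hAB ▸ hrep B ((hmem𝒞' B).1 hB))
    rcases h with ⟨h1, h2⟩ | ⟨h1, h2⟩
    · rw [show Cp = Cq from hinj hCp hCq h1, show Dp = Dq from hinj hDp hDq h2]
    · rw [show Cp = Dq from hinj hCp hDq h1, show Dp = Cq from hinj hDp hCq h2, Sym2.eq_swap]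
  have hQsub : ↑Q ⊆ contractibleNonEdges G := by
    intro p hp
    obtain ⟨q, hq, rfl⟩ := Finset.mem_image.mp hp
    obtain ⟨⟨Cp, Dp⟩, hpd, rfl⟩ := Finset.mem_image.mp hq
    obtain ⟨hCp, hDp, hpne⟩ := Finset.mem_offDiag.mp hpd
    have hCp' := (hmem𝒞' Cp).1 hCp
    have hDp' := (hmem𝒞' Dp).1 hDp
    exact ⟨rep Cp, rep Dp, Sym2.map_pair_eq rep Cp Dp,
      contractible_of_comps hG hS3 hk4 hCp' hDp' hpne (hrep Cp hCp') (hrep Dp hDp')⟩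
  calc k * (k - 1) / 2 = k.choose 2 := (Nat.choose_two_right k).symm
    _ = Q.card := by rw [hQcard, hPcard]
    _ = (↑Q : Set (Sym2 V)).ncard := (Set.ncard_coe_finset Q).symm
    _ ≤ (contractibleNonEdges G).ncard := Set.ncard_le_ncard hQsub (Set.toFinite _)
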